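/- arXiv:1112.5530 — 4 statements merged into one kernel-verified Lean document; each statement's English description precedes it below -/
import Mathlib

section
/- Let G be a finite group and H a subgroup. If S and T are right transversals of H in G (each containing the identity) that are isomorphic as right loops under the induced binary operations, then the sets S^{-1} and T^{-1} of inverses are left transversals of H in G that are isomorphic as left loops under the induced binary operations. Consequently, the number of isomorphism classes of left transversals equals the number of isomorphism classes of right transversals. -/
/-- A left transversal (with identity) of `H` in `G`: a set of representatives,
one from each left coset of `H`, containing `1`. -/
def IsLeftTransversal {G : Type*} [Group G] (H : Subgroup G) (S : Set G) : Prop :=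
  (1 : G) ∈ S ∧ ∀ g : G, ∃! s, s ∈ S ∧ s⁻¹ * g ∈ H

/-- A right transversal (with identity) of `H` in `G`. -/
def IsRightTransversal {G : Type*} [Group G] (H : Subgroup G) (S : Set G) : Prop :=
  (1 : G) ∈ S ∧ ∀ g : G, ∃! s, s ∈ S ∧ g * s⁻¹ ∈ H

/-- `σ` is an isomorphism of the induced left loop structures on left transversals
`T`, `L` of `H`: a bijection such that whenever `z = x ∘ y` in `T`
(i.e. `z ∈ T ∩ xyH`), also `σ z = σ x ∘ σ y` in `L`. -/
def IsLeftIso {G : Type*} [Group G] (H : Subgroup G) (T L : Set G) (σ : G → G) : Prop :=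
  Set.BijOn σ T L ∧ ∀ x ∈ T, ∀ y ∈ T, ∀ z ∈ T,
    z⁻¹ * (x * y) ∈ H → (σ z)⁻¹ * (σ x * σ y) ∈ H

/-- `σ` is an isomorphism of the induced right loop structures on right transversals. -/
def IsRightIso {G : Type*} [Group G] (H : Subgroup G) (T L : Set G) (σ : G → G) : Prop :=
  Set.BijOn σ T L ∧ ∀ x ∈ T, ∀ y ∈ T, ∀ z ∈ T,
    (x * y) * z⁻¹ ∈ H → (σ x * σ y) * (σ z)⁻¹ ∈ H

lemma right_trans_inv {G : Type*} [Group G] (H : Subgroup G) {S : Set G}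
    (h : IsRightTransversal H S) : IsLeftTransversal H S⁻¹ := by
  obtain ⟨h1, h2⟩ := h
  refine ⟨by simpa using h1, fun g => ?_⟩
  obtain ⟨s, ⟨hsS, hs⟩, hu⟩ := h2 g⁻¹
  refine ⟨s⁻¹, ⟨by simpa using hsS, by simpa [mul_inv_rev] using H.inv_mem hs⟩, ?_⟩
  rintro t ⟨htS, ht⟩
  have := hu t⁻¹ ⟨by simpa using htS, by simpa [mul_inv_rev] using H.inv_mem ht⟩
  rw [← this, inv_inv]

lemma left_trans_inv {G : Type*} [Group G] (H : Subgroup G) {S : Set G}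
    (h : IsLeftTransversal H S) : IsRightTransversal H S⁻¹ := by
  obtain ⟨h1, h2⟩ := h
  refine ⟨by simpa using h1, fun g => ?_⟩
  obtain ⟨s, ⟨hsS, hs⟩, hu⟩ := h2 g⁻¹
  refine ⟨s⁻¹, ⟨by simpa using hsS, by simpa [mul_inv_rev] using H.inv_mem hs⟩, ?_⟩
  rintro t ⟨htS, ht⟩
  have := hu t⁻¹ ⟨by simpa using htS, by simpa [mul_inv_rev] using H.inv_mem ht⟩
  rw [← this, inv_inv]

lemma bijon_inv_of {G : Type*} [Group G] {S T : Set G} {σ : G → G}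
    (h : Set.BijOn σ S T) : Set.BijOn (fun z => (σ z⁻¹)⁻¹) S⁻¹ T⁻¹ := by
  refine ⟨fun x hx => by simpa using h.mapsTo (by simpa using hx),
    fun x hx y hy hxy => ?_, fun y hy => ?_⟩
  · have := h.injOn (by simpa using hx) (by simpa using hy) (inv_injective hxy)
    simpa using congrArg Inv.inv this
  · obtain ⟨x, hx, hxe⟩ := h.surjOn (show y⁻¹ ∈ T by simpa using hy)
    exact ⟨x⁻¹, by simpa using hx, by simp [hxe]⟩

lemma right_iso_inv {G : Type*} [Group G] (H : Subgroup G) {S T : Set G} {σ : G → G}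
    (h : IsRightIso H S T σ) : IsLeftIso H S⁻¹ T⁻¹ (fun z => (σ z⁻¹)⁻¹) := by
  refine ⟨bijon_inv_of h.1, fun x hx y hy z hz hm => ?_⟩
  have key := h.2 y⁻¹ (by simpa using hy) x⁻¹ (by simpa using hx) z⁻¹ (by simpa using hz)
    (by simpa [mul_inv_rev, mul_assoc] using H.inv_mem hm)
  simpa [mul_inv_rev, mul_assoc] using H.inv_mem key

lemma left_iso_inv {G : Type*} [Group G] (H : Subgroup G) {S T : Set G} {σ : G → G}
    (h : IsLeftIso H S T σ) : IsRightIso H S⁻¹ T⁻¹ (fun z => (σ z⁻¹)⁻¹) := by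
  refine ⟨bijon_inv_of h.1, fun x hx y hy z hz hm => ?_⟩
  have key := h.2 y⁻¹ (by simpa using hy) x⁻¹ (by simpa using hx) z⁻¹ (by simpa using hz)
    (by simpa [mul_inv_rev, mul_assoc] using H.inv_mem hm)
  simpa [mul_inv_rev, mul_assoc] using H.inv_mem key


theorem isomorphic_right_transversals_give_isomorphic_left_transversals
    {G : Type*} [Group G] [Finite G] (H : Subgroup G) :
    (∀ (S T : Set G) (σ : G → G), IsRightTransversal H S → IsRightTransversal H T →
      IsRightIso H S T σ →
      IsLeftTransversal H S⁻¹ ∧ IsLeftTransversal H T⁻¹ ∧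
        ∃ φ : G → G, (∀ x ∈ S, φ x⁻¹ = (σ x)⁻¹) ∧ IsLeftIso H S⁻¹ T⁻¹ φ) ∧
    Nat.card (Quot fun (T L : {S : Set G // IsLeftTransversal H S}) =>
        ∃ σ : G → G, IsLeftIso H T.1 L.1 σ) =
      Nat.card (Quot fun (T L : {S : Set G // IsRightTransversal H S}) =>
        ∃ σ : G → G, IsRightIso H T.1 L.1 σ) := by
  constructor
  · intro S T σ hS hT hσ
    exact ⟨right_trans_inv H hS, right_trans_inv H hT,
      fun z => (σ z⁻¹)⁻¹, fun x _ => by simp, right_iso_inv H hσ⟩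
  · refine Nat.card_congr (Quot.congr
      (⟨fun S => ⟨S.1⁻¹, left_trans_inv H S.2⟩, fun S => ⟨S.1⁻¹, right_trans_inv H S.2⟩,
        fun S => Subtype.ext (inv_inv _), fun S => Subtype.ext (inv_inv _)⟩ :
        {S : Set G // IsLeftTransversal H S} ≃ {S : Set G // IsRightTransversal H S})
      fun a b => ⟨fun ⟨σ, hσ⟩ => ⟨_, left_iso_inv H hσ⟩,
        fun ⟨σ, hσ⟩ => ⟨_, by simpa using right_iso_inv H hσ⟩⟩)
end

section
/- Let G be a transitive subgroup of Sym(n), H = Stab_G(1), with H core-free in G. Then the group Aut_H(G) of automorphisms of G mapping H onto H is isomorphic to N_{Sym(n-1)}(G) / C_{Sym(n-1)}(G), where Sym(n-1) is the stabilizer of 1 in Sym(n). -/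
open Pointwise
set_option maxHeartbeats 1000000

namespace AutHAux

variable {n : ℕ} [NeZero n] (G : Subgroup (Equiv.Perm (Fin n)))

/-- Conjugation by a normalizer element as an automorphism of `G`. -/
def conjAut (x : Equiv.Perm (Fin n)) (hx : x ∈ Subgroup.normalizer (G : Set (Equiv.Perm (Fin n)))) : MulAut G where
  toFun g := ⟨x * g * x⁻¹, (Subgroup.mem_normalizer_iff.mp hx g.1).mp g.2⟩
  invFun g := ⟨x⁻¹ * g * x, by
    have := (Subgroup.mem_normalizer_iff.mp ((Subgroup.normalizer (G : Set (Equiv.Perm (Fin n)))).inv_mem hx) g.1).mp g.2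
    simpa [mul_assoc] using this⟩
  left_inv g := by ext : 1; simp [mul_assoc]
  right_inv g := by ext : 1; simp [mul_assoc]
  map_mul' g h := by ext : 1; simp [mul_assoc]

@[simp] lemma conjAut_apply (x : Equiv.Perm (Fin n)) (hx : x ∈ Subgroup.normalizer (G : Set (Equiv.Perm (Fin n)))) (g : G) :
    (conjAut G x hx g : Equiv.Perm (Fin n)) = x * g * x⁻¹ := rfl

@[simp] lemma conjAut_inv_apply (x : Equiv.Perm (Fin n)) (hx : x ∈ Subgroup.normalizer (G : Set (Equiv.Perm (Fin n)))) (g : G) :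
    ((conjAut G x hx)⁻¹ g : Equiv.Perm (Fin n)) = x⁻¹ * g * x := rfl

end AutHAux

theorem autH_iso_normalizer_quot_centralizer {n : ℕ} [NeZero n]
    (G : Subgroup (Equiv.Perm (Fin n)))
    (htrans : ∀ i : Fin n, ∃ g ∈ G, g 0 = i)
    (H : Subgroup (Equiv.Perm (Fin n)))
    (hH : H = G ⊓ MulAction.stabilizer (Equiv.Perm (Fin n)) (0 : Fin n))
    (hcf : (H.subgroupOf G).normalCore = ⊥)
    (N : Subgroup (Equiv.Perm (Fin n)))
    (hN : N = MulAction.stabilizer (Equiv.Perm (Fin n)) (0 : Fin n) ⊓ Subgroup.normalizer (G : Set (Equiv.Perm (Fin n))))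
    (C : Subgroup (Equiv.Perm (Fin n)))
    (hC : C = MulAction.stabilizer (Equiv.Perm (Fin n)) (0 : Fin n) ⊓
      Subgroup.centralizer (G : Set (Equiv.Perm (Fin n)))) :
    -- `Aut_H G ≅ N/C`, expressed by a surjective homomorphism `N → Aut_H G`
    -- whose kernel is `C` (viewed inside `N`)
    ∃ φ : N →* MulAction.stabilizer (MulAut G) (H.subgroupOf G),
      Function.Surjective φ ∧ φ.ker = C.subgroupOf N := by
  classical
  -- membership in `H.subgroupOf G`
  have hKmem : ∀ g : G, g ∈ H.subgroupOf G ↔ (g : Equiv.Perm (Fin n)) 0 = 0 := by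
    intro g
    simp [hH, Subgroup.mem_subgroupOf, Subgroup.mem_inf, g.2, MulAction.mem_stabilizer_iff,
      Equiv.Perm.smul_def]
  have hNstab : ∀ x : N, (x : Equiv.Perm (Fin n)) 0 = 0 := by
    intro x
    have h : (x : Equiv.Perm (Fin n)) ∈ MulAction.stabilizer (Equiv.Perm (Fin n)) (0 : Fin n) ⊓ Subgroup.normalizer (G : Set (Equiv.Perm (Fin n))) := by
      rw [← hN]; exact x.2
    simpa [MulAction.mem_stabilizer_iff, Equiv.Perm.smul_def] using (Subgroup.mem_inf.mp h).1
  have hNnorm : ∀ x : N, (x : Equiv.Perm (Fin n)) ∈ Subgroup.normalizer (G : Set (Equiv.Perm (Fin n))) := by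
    intro x
    have h : (x : Equiv.Perm (Fin n)) ∈ MulAction.stabilizer (Equiv.Perm (Fin n)) (0 : Fin n) ⊓ Subgroup.normalizer (G : Set (Equiv.Perm (Fin n))) := by
      rw [← hN]; exact x.2
    exact (Subgroup.mem_inf.mp h).2
  -- inverses also fix 0
  have hinv0 : ∀ x : Equiv.Perm (Fin n), x 0 = 0 → x⁻¹ 0 = 0 := by
    intro x hx
    conv_lhs => rw [← hx]
    simp
  -- conjugation stabilizes `H.subgroupOf G`
  have hstab : ∀ x : N, AutHAux.conjAut G x.1 (hNnorm x) ∈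
      MulAction.stabilizer (MulAut G) (H.subgroupOf G) := by
    intro x
    rw [MulAction.mem_stabilizer_iff]
    ext g
    rw [Subgroup.mem_pointwise_smul_iff_inv_smul_mem]
    have hsm : (AutHAux.conjAut G x.1 (hNnorm x))⁻¹ • g =
        (AutHAux.conjAut G x.1 (hNnorm x))⁻¹ g := rfl
    rw [hsm, hKmem, hKmem, AutHAux.conjAut_inv_apply]
    constructor
    · intro h
      have := congrArg (x : Equiv.Perm (Fin n)) h
      simpa [hNstab x] using this
    · intro h
      simp [h, hinv0 _ (hNstab x), hNstab x]; exact hinv0 _ (hNstab x)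
  -- the homomorphism
  refine ⟨{ toFun := fun x => ⟨AutHAux.conjAut G x.1 (hNnorm x), hstab x⟩,
            map_one' := ?_, map_mul' := ?_ }, ?_, ?_⟩
  · ext g : 3
    simp [AutHAux.conjAut]
  · intro x y
    ext g : 3
    simp [AutHAux.conjAut, mul_assoc]
  · -- surjectivity
    rintro ⟨f, hf⟩
    rw [MulAction.mem_stabilizer_iff] at hf
    -- choose coset representatives
    choose s hs hs0 using htrans
    set sg : Fin n → G := fun i => ⟨s i, hs i⟩ with hsg
    -- automorphisms preserving K send 0-fixers to 0-fixers
    have hpres : ∀ (e : MulAut G), e • (H.subgroupOf G) = H.subgroupOf G →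
        ∀ g : G, (g : Equiv.Perm (Fin n)) 0 = 0 → (e g : Equiv.Perm (Fin n)) 0 = 0 := by
      intro e he g hg
      have : e g ∈ e • (H.subgroupOf G) := by
        exact Subgroup.smul_mem_pointwise_smul _ _ _ ((hKmem g).mpr hg)
      rw [he, hKmem] at this
      exact this
    have hfinv : f⁻¹ • (H.subgroupOf G) = H.subgroupOf G := by
      rw [inv_smul_eq_iff, hf]
    -- key computation
    have key : ∀ (e : MulAut G), (∀ g : G, (g : Equiv.Perm (Fin n)) 0 = 0 → (e g : Equiv.Perm (Fin n)) 0 = 0) →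
        ∀ g : G, (e (sg ((g : Equiv.Perm (Fin n)) 0)) : Equiv.Perm (Fin n)) 0 = (e g : Equiv.Perm (Fin n)) 0 := by
      intro e he g
      set i := (g : Equiv.Perm (Fin n)) 0 with hi
      have h1 : (((sg i)⁻¹ * g : G) : Equiv.Perm (Fin n)) 0 = 0 := by
        have : (s i)⁻¹ ((g : Equiv.Perm (Fin n)) 0) = 0 := by
          rw [Equiv.Perm.inv_eq_iff_eq, hs0 i]
        simpa using this
      have h2 := he _ h1
      rw [map_mul, map_inv] at h2
      have h3 : ((e (sg i) : Equiv.Perm (Fin n)))⁻¹ ((e g : Equiv.Perm (Fin n)) 0) = 0 := by simpa using h2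
      have := congrArg (e (sg i) : Equiv.Perm (Fin n)) h3
      simpa using this.symm
    have keyf := key f (hpres f hf)
    have keyfinv := key f⁻¹ (hpres f⁻¹ hfinv)
    -- the permutation
    have hli : Function.LeftInverse (fun i => (f⁻¹ (sg i) : Equiv.Perm (Fin n)) 0)
        (fun i => (f (sg i) : Equiv.Perm (Fin n)) 0) := by
      intro i
      have h := keyfinv (f (sg i))
      simp only [hs0] at h ⊢
      rw [h]
      simp [hs0]; exact hs0 i
    have hri : Function.RightInverse (fun i => (f⁻¹ (sg i) : Equiv.Perm (Fin n)) 0)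
        (fun i => (f (sg i) : Equiv.Perm (Fin n)) 0) := by
      intro i
      have h := keyf (f⁻¹ (sg i))
      simp only [hs0] at h ⊢
      rw [h]
      simp [hs0]; exact hs0 i
    set σ : Equiv.Perm (Fin n) := ⟨fun i => (f (sg i) : Equiv.Perm (Fin n)) 0,
      fun i => (f⁻¹ (sg i) : Equiv.Perm (Fin n)) 0, hli, hri⟩ with hσ
    have hσ0 : σ 0 = 0 := by
      have h0 : (((1 : G) : Equiv.Perm (Fin n))) 0 = 0 := by simp
      have := keyf 1
      simp only [map_one] at this
      show (f (sg 0) : Equiv.Perm (Fin n)) 0 = 0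
      have h1 : ((1 : G) : Equiv.Perm (Fin n)) 0 = 0 := by simp
      calc (f (sg 0) : Equiv.Perm (Fin n)) 0 = (f (sg (((1:G) : Equiv.Perm (Fin n)) 0)) : Equiv.Perm (Fin n)) 0 := by rw [h1]
        _ = ((1 : G) : Equiv.Perm (Fin n)) 0 := by rw [keyf 1, map_one]
        _ = 0 := by simp
    have hσapp : ∀ i, σ i = (f (sg i) : Equiv.Perm (Fin n)) 0 := fun i => rfl
    have hσinvapp : ∀ i, σ⁻¹ i = (f⁻¹ (sg i) : Equiv.Perm (Fin n)) 0 := fun i => rfl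
    -- conjugation relation
    have hrel : ∀ g : G, σ * (g : Equiv.Perm (Fin n)) * σ⁻¹ = (f g : Equiv.Perm (Fin n)) := by
      intro g
      rw [mul_inv_eq_iff_eq_mul]
      apply Equiv.ext
      intro i
      simp only [Equiv.Perm.mul_apply]
      show σ ((g : Equiv.Perm (Fin n)) i) = (f g : Equiv.Perm (Fin n)) (σ i)
      have h1 : (g : Equiv.Perm (Fin n)) i = ((g * sg i : G) : Equiv.Perm (Fin n)) 0 := by
        simp [hs0]; exact (hs0 i).symm
      rw [h1, hσapp, keyf (g * sg i), map_mul]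
      simp [hσapp]
    have hrelinv : ∀ g : G, σ⁻¹ * (g : Equiv.Perm (Fin n)) * σ = (f⁻¹ g : Equiv.Perm (Fin n)) := by
      intro g
      have h := hrel (f⁻¹ g)
      simp only [MulAut.apply_inv_self] at h
      rw [← h]
      group
    have hmemN : σ ∈ N := by
      rw [hN, Subgroup.mem_inf]
      refine ⟨by simpa [MulAction.mem_stabilizer_iff, Equiv.Perm.smul_def] using hσ0, ?_⟩
      rw [Subgroup.mem_normalizer_iff]
      intro h
      constructor
      · intro hh
        have := hrel ⟨h, hh⟩
        rw [this]
        exact (f ⟨h, hh⟩).2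
      · intro hh
        have h2 := hrelinv ⟨σ * h * σ⁻¹, hh⟩
        have h3 : σ⁻¹ * (σ * h * σ⁻¹) * σ = h := by group
        rw [h3] at h2
        rw [h2]
        exact (f⁻¹ ⟨σ * h * σ⁻¹, hh⟩).2
    refine ⟨⟨σ, hmemN⟩, ?_⟩
    refine Subtype.ext (MulEquiv.ext fun g => Subtype.ext ?_)
    exact hrel g
  · -- kernel
    ext x
    simp only [MonoidHom.mem_ker, MonoidHom.coe_mk, OneHom.coe_mk, Subgroup.mem_subgroupOf,
      hC, Subgroup.mem_inf]
    constructor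
    · intro h
      have h' : AutHAux.conjAut G x.1 (hNnorm x) = 1 := by
        simpa [Subtype.ext_iff] using h
      refine ⟨by simpa [MulAction.mem_stabilizer_iff, Equiv.Perm.smul_def] using hNstab x, ?_⟩
      rw [Subgroup.mem_centralizer_iff]
      intro g hg
      have := congrArg (fun e : MulAut G => ((e ⟨g, hg⟩ : G) : Equiv.Perm (Fin n))) h'
      simp only [AutHAux.conjAut_apply, MulAut.one_apply] at this
      have h2 : (x : Equiv.Perm (Fin n)) * g * (x : Equiv.Perm (Fin n))⁻¹ = g := this
      calc g * (x : Equiv.Perm (Fin n)) = ((x : Equiv.Perm (Fin n)) * g * (x : Equiv.Perm (Fin n))⁻¹) * (x : Equiv.Perm (Fin n)) := by rw [h2]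
        _ = (x : Equiv.Perm (Fin n)) * g := by group
    · rintro ⟨-, hcen⟩
      rw [Subgroup.mem_centralizer_iff] at hcen
      refine Subtype.ext (MulEquiv.ext fun g => Subtype.ext ?_)
      simp only [AutHAux.conjAut_apply]
      have := hcen g.1 g.2
      show (x : Equiv.Perm (Fin n)) * g * (x : Equiv.Perm (Fin n))⁻¹ = ((1 : MulAut G) g : Equiv.Perm (Fin n))
      rw [MulAut.one_apply]
      rw [← this]
      group
end

section
/- Let D_n = ⟨a, b : a^n = 1, b^2 = 1, bab^{-1} = a^{-1}⟩ and H = ⟨b⟩. If T is a left transversal of H in D_n (with identity) that is a subgroup of D_n, then either T = ⟨a⟩, or n is even and T = ⟨a^2, ab⟩, which is a dihedral group of order n. -/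
open DihedralGroup Subgroup

private lemma dih_r_inv {n : ℕ} (i : ZMod n) : (r i)⁻¹ = r (-i) :=
  inv_eq_of_mul_eq_one_right (by rw [r_mul_r, add_neg_cancel]; rfl)

private lemma dih_sr_inv {n : ℕ} (i : ZMod n) : (sr i)⁻¹ = sr i :=
  inv_eq_of_mul_eq_one_right (sr_mul_self i)

private lemma dih_memH {n : ℕ} (x : DihedralGroup n) :
    x ∈ Subgroup.zpowers (sr (0 : ZMod n)) ↔ x = 1 ∨ x = sr 0 := by
  constructor
  · rintro ⟨k, rfl⟩
    have h2 : (sr (0 : ZMod n)) ^ (2 : ℤ) = 1 := by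
      rw [zpow_two, sr_mul_self]
    rcases Int.even_or_odd k with ⟨m, rfl⟩ | ⟨m, rfl⟩
    · left
      have hmm : m + m = 2 * m := by ring
      show sr (0 : ZMod n) ^ (m + m) = 1
      rw [hmm, zpow_mul, h2, one_zpow]
    · right
      show sr (0 : ZMod n) ^ (2 * m + 1) = sr 0
      rw [zpow_add, zpow_mul, h2, one_zpow, zpow_one, one_mul]
  · rintro (rfl | rfl)
    · exact one_mem _
    · exact mem_zpowers _

/-- If a left transversal (with identity) of `H = ⟨b⟩` in the dihedral group `D_n`
is a subgroup, then it is `⟨a⟩`, or `n` is even and it is `⟨a², ab⟩`, a dihedral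
group of order `n`. -/
theorem dihedral_subgroup_transversal (n : ℕ) (hn : 0 < n)
    (T : Set (DihedralGroup n))
    (hT : IsLeftTransversal (Subgroup.zpowers (DihedralGroup.sr (0 : ZMod n))) T)
    (U : Subgroup (DihedralGroup n)) (hTU : T = (U : Set (DihedralGroup n))) :
    T = (Subgroup.zpowers (DihedralGroup.r (1 : ZMod n)) : Set (DihedralGroup n)) ∨
      (Even n ∧
        T = (Subgroup.closure {DihedralGroup.r (2 : ZMod n),
            DihedralGroup.r (1 : ZMod n) * DihedralGroup.sr (0 : ZMod n)} :
          Set (DihedralGroup n)) ∧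
        Nat.card (Subgroup.closure {DihedralGroup.r (2 : ZMod n),
          DihedralGroup.r (1 : ZMod n) * DihedralGroup.sr (0 : ZMod n)}) = n) := by
  subst hTU
  haveI : NeZero n := ⟨hn.ne'⟩
  -- for each i, exactly one of `r i`, `sr (-i)` lies in `U`
  have pair : ∀ i : ZMod n,
      (r i ∈ U ∧ sr (-i) ∉ U) ∨ (r i ∉ U ∧ sr (-i) ∈ U) := by
    intro i
    obtain ⟨s, ⟨hsU, hsH⟩, huniq⟩ := hT.2 (r i)
    have hc1 : (r i)⁻¹ * r i ∈ Subgroup.zpowers (sr (0 : ZMod n)) := by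
      rw [inv_mul_cancel]; exact one_mem _
    have hc2 : (sr (-i))⁻¹ * r i ∈ Subgroup.zpowers (sr (0 : ZMod n)) := by
      rw [dih_sr_inv, sr_mul_r, neg_add_cancel]; exact mem_zpowers _
    rcases (dih_memH _).mp hsH with h | h
    · have hs : s = r i := inv_mul_eq_one.mp h
      subst hs
      refine Or.inl ⟨hsU, fun hmem => ?_⟩
      have := huniq (sr (-i)) ⟨hmem, hc2⟩
      exact absurd this (by simp)
    · have hs : s = sr (-i) := by
        have h' : r i = s * sr 0 := by rw [← h, mul_inv_cancel_left]
        calc s = s * sr 0 * sr 0 := by rw [mul_assoc, sr_mul_self, mul_one]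
          _ = r i * sr 0 := by rw [← h']
          _ = sr (-i) := by rw [r_mul_sr, zero_sub]
      subst hs
      refine Or.inr ⟨fun hmem => ?_, hsU⟩
      have := huniq (r i) ⟨hmem, hc1⟩
      exact absurd this (by simp)
  by_cases h1 : r (1 : ZMod n) ∈ U
  · -- Case `T = ⟨a⟩`
    left
    have hallr : ∀ k : ZMod n, r k ∈ U := by
      intro k
      have := U.pow_mem h1 k.val
      rwa [r_one_pow, ZMod.natCast_val, ZMod.cast_id] at this
    ext x
    simp only [SetLike.mem_coe]
    constructor
    · intro hx
      cases x with
      | r j =>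
        exact Subgroup.mem_zpowers_iff.mpr
          ⟨(j.val : ℤ), by rw [zpow_natCast, r_one_pow, ZMod.natCast_val, ZMod.cast_id]⟩
      | sr j =>
        exfalso
        rcases pair (-j) with ⟨_, hno⟩ | ⟨hno, _⟩
        · rw [neg_neg] at hno; exact hno hx
        · exact hno (hallr _)
    · intro hx
      exact (zpowers_le.mpr h1) hx
  · -- Case `T = ⟨a², ab⟩`
    right
    have h1' : sr (-1 : ZMod n) ∈ U := by
      rcases pair 1 with ⟨h, _⟩ | ⟨_, h⟩
      · exact absurd h h1
      · exact h
    have h2 : r (2 : ZMod n) ∈ U := by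
      rcases pair 2 with ⟨h, _⟩ | ⟨_, h⟩
      · exact h
      · exfalso
        have hm := U.mul_mem h h1'
        rw [sr_mul_sr] at hm
        have e : (-1 : ZMod n) - (-2) = 1 := by ring
        rw [e] at hm
        exact h1 hm
    have hpow : ∀ m : ℕ, (r (2 : ZMod n)) ^ m = r ((2 * m : ℕ) : ZMod n) := by
      intro m
      have h22 : (r (2 : ZMod n)) = (r 1) ^ 2 := by
        rw [r_one_pow]; norm_num
      rw [h22, ← pow_mul, r_one_pow]
    have heven : Even n := by
      by_contra hodd
      rw [Nat.not_even_iff_odd] at hodd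
      have hmem := U.pow_mem h2 ((n + 1) / 2)
      rw [hpow] at hmem
      have e : 2 * ((n + 1) / 2) = n + 1 := by
        obtain ⟨m, rfl⟩ := hodd
        omega
      rw [e, Nat.cast_add, Nat.cast_one, ZMod.natCast_self, zero_add] at hmem
      exact h1 hmem
    have hgen : r (1 : ZMod n) * sr 0 = sr (-1) := by rw [r_mul_sr, zero_sub]
    rw [hgen]
    have hsub : Subgroup.closure {r (2 : ZMod n), sr (-1 : ZMod n)} ≤ U := by
      rw [closure_le]
      rintro x hx
      rcases hx with rfl | rfl
      · exact h2
      · exact h1'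
    have hmem2 : r (2 : ZMod n) ∈ Subgroup.closure {r (2 : ZMod n), sr (-1 : ZMod n)} :=
      subset_closure (Set.mem_insert _ _)
    have hmemS : sr (-1 : ZMod n) ∈ Subgroup.closure {r (2 : ZMod n), sr (-1 : ZMod n)} :=
      subset_closure (Set.mem_insert_of_mem _ rfl)
    have hset : (U : Set (DihedralGroup n)) =
        (Subgroup.closure {r (2 : ZMod n), sr (-1 : ZMod n)} : Set (DihedralGroup n)) := by
      apply Set.Subset.antisymm
      · intro x hx
        simp only [SetLike.mem_coe] at hx ⊢
        cases x with
        | r j =>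
          rcases Nat.even_or_odd j.val with ⟨m, hm⟩ | ⟨m, hm⟩
          · have hj : j = ((2 * m : ℕ) : ZMod n) := by
              have hv : j.val = 2 * m := by omega
              rw [← hv, ZMod.natCast_val, ZMod.cast_id]
            rw [hj, ← hpow]
            exact pow_mem hmem2 m
          · exfalso
            have hr2m : r (((2 * m : ℕ) : ZMod n)) ∈ U := by
              rw [← hpow]; exact U.pow_mem h2 m
            have hrneg : r (-((2 * m : ℕ) : ZMod n)) ∈ U := by
              have := U.inv_mem hr2m; rwa [dih_r_inv] at this
            have hsj : sr (-j) ∈ U := by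
              have hmul := U.mul_mem h1' hrneg
              rw [sr_mul_r] at hmul
              have e : (-1 : ZMod n) + -((2 * m : ℕ) : ZMod n) = -j := by
                have hj : j = ((2 * m + 1 : ℕ) : ZMod n) := by
                  rw [← hm, ZMod.natCast_val, ZMod.cast_id]
                rw [hj]; push_cast; ring
              rwa [e] at hmul
            rcases pair j with ⟨_, hno⟩ | ⟨hno, _⟩
            · exact hno hsj
            · exact hno hx
        | sr j =>
          rcases Nat.even_or_odd j.val with ⟨m, hm⟩ | ⟨m, hm⟩
          · exfalso
            have hj : j = ((2 * m : ℕ) : ZMod n) := by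
              have hv : j.val = 2 * m := by omega
              rw [← hv, ZMod.natCast_val, ZMod.cast_id]
            have hrj : r j ∈ U := by rw [hj, ← hpow]; exact U.pow_mem h2 m
            have hrneg : r (-j) ∈ U := by
              have := U.inv_mem hrj; rwa [dih_r_inv] at this
            rcases pair (-j) with ⟨_, hno⟩ | ⟨hno, _⟩
            · rw [neg_neg] at hno; exact hno hx
            · exact hno hrneg
          · have hj : j = ((2 * m + 1 : ℕ) : ZMod n) := by
              rw [← hm, ZMod.natCast_val, ZMod.cast_id]
            have hr : r (((2 * (m + 1) : ℕ)) : ZMod n) ∈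
                Subgroup.closure {r (2 : ZMod n), sr (-1 : ZMod n)} := by
              rw [← hpow]; exact pow_mem hmem2 (m + 1)
            have hmul := mul_mem hmemS hr
            rw [sr_mul_r] at hmul
            have e : (-1 : ZMod n) + ((2 * (m + 1) : ℕ) : ZMod n) = j := by
              rw [hj]; push_cast; ring
            rwa [e] at hmul
      · intro x hx
        exact hsub hx
    refine ⟨heven, hset, ?_⟩
    have hUeq : Subgroup.closure {r (2 : ZMod n), sr (-1 : ZMod n)} = U :=
      (SetLike.ext' hset).symm
    rw [hUeq]
    -- `U` is a complement of `H`, so it has `n` elements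
    have hcomp : Subgroup.IsComplement (U : Set (DihedralGroup n))
        ((Subgroup.zpowers (sr (0 : ZMod n)) : Subgroup (DihedralGroup n)) :
          Set (DihedralGroup n)) := by
      rw [Subgroup.isComplement_iff_existsUnique]
      intro g
      obtain ⟨s, ⟨hsU, hsH⟩, huniq⟩ := hT.2 g
      refine ⟨⟨⟨s, hsU⟩, ⟨s⁻¹ * g, hsH⟩⟩, by simp, ?_⟩
      rintro ⟨⟨s', hs'U⟩, ⟨t', ht'H⟩⟩ h
      simp only at h
      have ht' : s'⁻¹ * g = t' := by rw [← h, inv_mul_cancel_left]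
      have hs' : s' = s := huniq s' ⟨hs'U, ht' ▸ ht'H⟩
      refine Prod.ext (Subtype.ext hs') (Subtype.ext ?_)
      simp only
      rw [← ht', hs']
    have hcard := hcomp.card_mul_card
    rw [DihedralGroup.nat_card] at hcard
    have hH2 : Nat.card (Subgroup.zpowers (sr (0 : ZMod n))) = 2 := by
      rw [Nat.card_zpowers, orderOf_sr]
    simp only [SetLike.coe_sort_coe] at hcard
    rw [hH2] at hcard
    omega
end

section
/- For the dihedral group D_3 = ⟨a,b : a^3 = b^2 = 1, bab^{-1} = a^{-1}⟩ and non-normal subgroup H = ⟨b⟩ of order 2, the number of isomorphism classes of left transversals of H in D_3 (under their induced left loop structures) is 3. -/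
namespace ICT
open DihedralGroup
abbrev G := DihedralGroup 3
abbrev H : Subgroup G := Subgroup.zpowers (sr (0:ZMod 3))

lemma sr_sq : (sr (0:ZMod 3))^(2:ℤ) = 1 := by decide

lemma memH (g : G) : g ∈ H ↔ (g = 1 ∨ g = sr 0) := by
  constructor
  · rintro ⟨k, rfl⟩
    simp only
    rcases Int.even_or_odd k with ⟨m, rfl⟩ | ⟨m, rfl⟩
    · left; rw [← two_mul, zpow_mul, sr_sq, one_zpow]
    · right; rw [zpow_add, zpow_mul, sr_sq, one_zpow, one_mul, zpow_one]
  · rintro (rfl | rfl)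
    · exact one_mem _
    · exact Subgroup.mem_zpowers _

def elt : Fin 4 → Fin 3 → G :=
  ![![1, r 1, r 2], ![1, r 1, sr 1], ![1, sr 2, r 2], ![1, sr 2, sr 1]]

def Tset (i : Fin 4) : Set G := {elt i 0, elt i 1, elt i 2}

lemma elt_inj : ∀ i : Fin 4, ∀ k m : Fin 3, elt i k = elt i m → k = m := by decide

lemma mem_Tset (i : Fin 4) (g : G) : g ∈ Tset i ↔ ∃ k, g = elt i k := by
  simp only [Tset, Set.mem_insert_iff, Set.mem_singleton_iff]
  constructor
  · rintro (h|h|h); exacts [⟨0,h⟩,⟨1,h⟩,⟨2,h⟩]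
  · rintro ⟨k, rfl⟩; fin_cases k <;> simp

lemma trans_Tset (i : Fin 4) : IsLeftTransversal H (Tset i) := by
  constructor
  · fin_cases i <;> exact Set.mem_insert _ _
  · intro g
    simp only [ExistsUnique, Tset, Set.mem_insert_iff, Set.mem_singleton_iff, memH]
    revert g; fin_cases i <;> decide

lemma trans_iff (S : Set G) : IsLeftTransversal H S ↔ ∃ i, S = Tset i := by
  constructor
  · rintro ⟨h1, h2⟩
    -- sr 0 ∉ S
    have hsr0 : sr 0 ∉ S := by
      intro hm
      obtain ⟨s, _, hu⟩ := h2 1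
      have e1 := hu 1 ⟨h1, by rw [memH]; left; decide⟩
      have e2 := hu (sr 0) ⟨hm, by rw [memH]; right; decide⟩
      rw [← e1] at e2; exact absurd e2 (by decide)
    -- exactly one of g, g * sr 0 is in S
    have key : ∀ g : G, (g ∈ S ∧ g * sr 0 ∉ S) ∨ (g * sr 0 ∈ S ∧ g ∉ S) := by
      intro g
      have hne : g ≠ g * sr 0 := by
        intro h
        have h' : g * 1 = g * sr 0 := by rw [mul_one]; exact h
        exact absurd (mul_left_cancel h') (by decide)
      have hc1 : g⁻¹ * g ∈ H := by rw [inv_mul_cancel]; exact one_mem _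
      have hc2 : (g * sr 0)⁻¹ * g ∈ H := by
        rw [memH, mul_inv_rev]
        right
        have : (sr (0 : ZMod 3))⁻¹ = sr 0 := by decide
        rw [this, mul_assoc, inv_mul_cancel, mul_one]
      obtain ⟨s, ⟨hsS, hsH⟩, hu⟩ := h2 g
      rw [memH] at hsH
      have hs12 : s = g ∨ s = g * sr 0 := by
        rcases hsH with h | h
        · exact Or.inl (inv_mul_eq_one.mp h)
        · right
          have : s⁻¹ * g * (sr 0)⁻¹ = 1 := by rw [h, mul_inv_cancel]
          have h2' : s⁻¹ * (g * (sr 0)⁻¹) = 1 := by rw [← mul_assoc]; exact this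
          have h3 := (inv_mul_eq_one.mp h2')
          rw [h3, show ((sr (0:ZMod 3))⁻¹ : G) = sr 0 from by decide]
      rcases hs12 with rfl | rfl
      · exact Or.inl ⟨hsS, fun hm => hne (hu _ ⟨hm, hc2⟩).symm⟩
      · exact Or.inr ⟨hsS, fun hm => hne (hu _ ⟨hm, hc1⟩)⟩
    have k1 := key (r 1)
    have k2 := key (r 2)
    have e1 : r (1:ZMod 3) * sr 0 = sr 2 := by decide
    have e2 : r (2:ZMod 3) * sr 0 = sr 1 := by decide
    rw [e1] at k1; rw [e2] at k2
    have hall : ∀ g : G, g = 1 ∨ g = sr 0 ∨ g = r 1 ∨ g = sr 2 ∨ g = r 2 ∨ g = sr 1 := by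
      decide
    -- now pick the right i and prove set equality
    have hext : ∀ (i : Fin 4), (1 ∈ Tset i) → (sr 0 ∉ Tset i) →
        ((r 1 ∈ S ↔ r 1 ∈ Tset i)) → ((sr 2 ∈ S ↔ sr 2 ∈ Tset i)) →
        ((r 2 ∈ S ↔ r 2 ∈ Tset i)) → ((sr 1 ∈ S ↔ sr 1 ∈ Tset i)) → S = Tset i := by
      intro i t1 t2 t3 t4 t5 t6
      ext g
      rcases hall g with rfl | rfl | rfl | rfl | rfl | rfl
      · simp [h1, t1]
      · simp [hsr0, t2]
      · exact t3
      · exact t4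
      · exact t5
      · exact t6
    rcases k1 with ⟨hr1, hs2⟩ | ⟨hs2, hr1⟩ <;> rcases k2 with ⟨hr2, hs1⟩ | ⟨hs1, hr2⟩
    · exact ⟨0, hext 0 (by simp only [Tset, elt, Set.mem_insert_iff, Set.mem_singleton_iff]; try decide) (by simp only [Tset, elt, Set.mem_insert_iff, Set.mem_singleton_iff]; try decide)
        (iff_of_true hr1 (by simp only [Tset, elt, Set.mem_insert_iff, Set.mem_singleton_iff]; try decide)) (iff_of_false hs2 (by simp only [Tset, elt, Set.mem_insert_iff, Set.mem_singleton_iff]; try decide)) (iff_of_true hr2 (by simp only [Tset, elt, Set.mem_insert_iff, Set.mem_singleton_iff]; try decide)) (iff_of_false hs1 (by simp only [Tset, elt, Set.mem_insert_iff, Set.mem_singleton_iff]; try decide))⟩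
    · exact ⟨1, hext 1 (by simp only [Tset, elt, Set.mem_insert_iff, Set.mem_singleton_iff]; try decide) (by simp only [Tset, elt, Set.mem_insert_iff, Set.mem_singleton_iff]; try decide)
        (iff_of_true hr1 (by simp only [Tset, elt, Set.mem_insert_iff, Set.mem_singleton_iff]; try decide)) (iff_of_false hs2 (by simp only [Tset, elt, Set.mem_insert_iff, Set.mem_singleton_iff]; try decide)) (iff_of_false hr2 (by simp only [Tset, elt, Set.mem_insert_iff, Set.mem_singleton_iff]; try decide)) (iff_of_true hs1 (by simp only [Tset, elt, Set.mem_insert_iff, Set.mem_singleton_iff]; try decide))⟩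
    · exact ⟨2, hext 2 (by simp only [Tset, elt, Set.mem_insert_iff, Set.mem_singleton_iff]; try decide) (by simp only [Tset, elt, Set.mem_insert_iff, Set.mem_singleton_iff]; try decide)
        (iff_of_false hr1 (by simp only [Tset, elt, Set.mem_insert_iff, Set.mem_singleton_iff]; try decide)) (iff_of_true hs2 (by simp only [Tset, elt, Set.mem_insert_iff, Set.mem_singleton_iff]; try decide)) (iff_of_true hr2 (by simp only [Tset, elt, Set.mem_insert_iff, Set.mem_singleton_iff]; try decide)) (iff_of_false hs1 (by simp only [Tset, elt, Set.mem_insert_iff, Set.mem_singleton_iff]; try decide))⟩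
    · exact ⟨3, hext 3 (by simp only [Tset, elt, Set.mem_insert_iff, Set.mem_singleton_iff]; try decide) (by simp only [Tset, elt, Set.mem_insert_iff, Set.mem_singleton_iff]; try decide)
        (iff_of_false hr1 (by simp only [Tset, elt, Set.mem_insert_iff, Set.mem_singleton_iff]; try decide)) (iff_of_true hs2 (by simp only [Tset, elt, Set.mem_insert_iff, Set.mem_singleton_iff]; try decide)) (iff_of_false hr2 (by simp only [Tset, elt, Set.mem_insert_iff, Set.mem_singleton_iff]; try decide)) (iff_of_true hs1 (by simp only [Tset, elt, Set.mem_insert_iff, Set.mem_singleton_iff]; try decide))⟩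
  · rintro ⟨i, rfl⟩; exact trans_Tset i

lemma elt_mem (i : Fin 4) (k : Fin 3) : elt i k ∈ Tset i := (mem_Tset i _).mpr ⟨k, rfl⟩

def sRel (i j : Fin 4) : Prop :=
  ∃ π : Fin 3 → Fin 3, Function.Surjective π ∧ ∀ x y z : Fin 3,
    ((elt i z)⁻¹ * (elt i x * elt i y) = 1 ∨ (elt i z)⁻¹ * (elt i x * elt i y) = sr 0) →
    ((elt j (π z))⁻¹ * (elt j (π x) * elt j (π y)) = 1 ∨
      (elt j (π z))⁻¹ * (elt j (π x) * elt j (π y)) = sr 0)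

instance : DecidableRel sRel := fun _ _ => Fintype.decidableExistsFintype

lemma iso_iff (i j : Fin 4) :
    (∃ σ : G → G, IsLeftIso H (Tset i) (Tset j) σ) ↔ sRel i j := by
  constructor
  · rintro ⟨σ, ⟨hmap, hinj, hsurj⟩, hloop⟩
    have hσ : ∀ k, ∃ m, σ (elt i k) = elt j m :=
      fun k => (mem_Tset j _).mp (hmap (elt_mem i k))
    choose π hπ using hσ
    refine ⟨π, ?_, ?_⟩
    · intro m
      obtain ⟨x, hxT, hx⟩ := hsurj (elt_mem j m)
      obtain ⟨k, rfl⟩ := (mem_Tset i x).mp hxT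
      exact ⟨k, elt_inj j _ _ (by rw [← hπ]; exact hx)⟩
    · intro x y z hH
      have := hloop (elt i x) (elt_mem i x) (elt i y) (elt_mem i y) (elt i z) (elt_mem i z)
        ((memH _).mpr hH)
      rw [memH, hπ, hπ, hπ] at this
      exact this
  · rintro ⟨π, hsurj, hloop⟩
    have hinjπ : Function.Injective π := Finite.injective_iff_surjective.mpr hsurj
    set σ : G → G := fun g =>
      if g = elt i 0 then elt j (π 0) else
      if g = elt i 1 then elt j (π 1) else
      if g = elt i 2 then elt j (π 2) else g with hσdef
    have hne : ∀ k m : Fin 3, k ≠ m → elt i k ≠ elt i m :=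
      fun k m h hk => h (elt_inj i _ _ hk)
    have hσ0 : σ (elt i 0) = elt j (π 0) := by
      show (if elt i 0 = elt i 0 then elt j (π 0) else if elt i 0 = elt i 1 then elt j (π 1)
        else if elt i 0 = elt i 2 then elt j (π 2) else elt i 0) = elt j (π 0)
      rw [if_pos rfl]
    have hσ1 : σ (elt i 1) = elt j (π 1) := by
      show (if elt i 1 = elt i 0 then elt j (π 0) else if elt i 1 = elt i 1 then elt j (π 1)
        else if elt i 1 = elt i 2 then elt j (π 2) else elt i 1) = elt j (π 1)
      rw [if_neg (hne 1 0 (by decide)), if_pos rfl]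
    have hσ2 : σ (elt i 2) = elt j (π 2) := by
      show (if elt i 2 = elt i 0 then elt j (π 0) else if elt i 2 = elt i 1 then elt j (π 1)
        else if elt i 2 = elt i 2 then elt j (π 2) else elt i 2) = elt j (π 2)
      rw [if_neg (hne 2 0 (by decide)), if_neg (hne 2 1 (by decide)), if_pos rfl]
    have hσ : ∀ k, σ (elt i k) = elt j (π k) := by
      intro k
      fin_cases k
      · exact hσ0
      · exact hσ1
      · exact hσ2
    refine ⟨σ, ⟨⟨?_, ?_, ?_⟩, ?_⟩⟩
    · intro x hx
      obtain ⟨k, rfl⟩ := (mem_Tset i x).mp hx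
      rw [hσ]; exact elt_mem j _
    · intro x hx y hy hxy
      obtain ⟨k, rfl⟩ := (mem_Tset i x).mp hx
      obtain ⟨m, rfl⟩ := (mem_Tset i y).mp hy
      rw [hσ, hσ] at hxy
      exact congrArg (elt i) (hinjπ (elt_inj j _ _ hxy))
    · intro y hy
      obtain ⟨m, rfl⟩ := (mem_Tset j y).mp hy
      obtain ⟨k, hk⟩ := hsurj m
      exact ⟨elt i k, elt_mem i k, by rw [hσ, hk]⟩
    · intro x hx y hy z hz hH
      obtain ⟨k, rfl⟩ := (mem_Tset i x).mp hx
      obtain ⟨m, rfl⟩ := (mem_Tset i y).mp hy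
      obtain ⟨l, rfl⟩ := (mem_Tset i z).mp hz
      rw [memH] at hH ⊢
      rw [hσ, hσ, hσ]
      exact hloop k m l hH

def lab : Fin 4 → Fin 3 := ![0, 1, 1, 2]
def rep : Fin 3 → Fin 4 := ![0, 1, 3]

set_option maxHeartbeats 2000000 in
lemma lab_const : ∀ a b, sRel a b → lab a = lab b := by decide

lemma srel12 : sRel 1 2 := by decide

def quotEquivFin3 : Quot sRel ≃ Fin 3 where
  toFun := Quot.lift lab lab_const
  invFun k := Quot.mk _ (rep k)
  left_inv := by
    apply Quot.ind
    intro i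
    fin_cases i
    · exact congrArg (Quot.mk sRel) (by decide : rep (lab 0) = 0)
    · exact congrArg (Quot.mk sRel) (by decide : rep (lab 1) = 1)
    · exact (congrArg (Quot.mk sRel) (by decide : rep (lab 2) = 1)).trans (Quot.sound srel12)
    · exact congrArg (Quot.mk sRel) (by decide : rep (lab 3) = 3)
  right_inv k := by fin_cases k <;> rfl

lemma Tset_inj : Function.Injective Tset := by
  have hF : ∀ a b : Fin 4, ({elt a 0, elt a 1, elt a 2} : Finset G) =
      ({elt b 0, elt b 1, elt b 2} : Finset G) → a = b := by decide
  intro a b h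
  apply hF
  apply Finset.coe_injective
  simpa [Tset] using h

noncomputable def idx (S : {S : Set G // IsLeftTransversal H S}) : Fin 4 :=
  ((trans_iff S.1).mp S.2).choose

lemma idx_spec (S : {S : Set G // IsLeftTransversal H S}) : S.1 = Tset (idx S) :=
  ((trans_iff S.1).mp S.2).choose_spec

noncomputable def e : {S : Set G // IsLeftTransversal H S} ≃ Fin 4 where
  toFun := idx
  invFun i := ⟨Tset i, trans_Tset i⟩
  left_inv S := Subtype.ext (idx_spec S).symm
  right_inv i := (Tset_inj (idx_spec ⟨Tset i, trans_Tset i⟩).symm)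

abbrev LT := {S : Set G // IsLeftTransversal H S}

def rrel (T L : LT) : Prop := ∃ σ : G → G, IsLeftIso H T.1 L.1 σ

lemma rel_iff (T L : LT) : rrel T L ↔ sRel (e T) (e L) := by
  unfold rrel
  rw [show T.1 = Tset (idx T) from idx_spec T, show L.1 = Tset (idx L) from idx_spec L]
  exact iso_iff _ _

noncomputable def bigEquiv : Quot rrel ≃ Fin 3 :=
  (Quot.congr e rel_iff).trans quotEquivFin3

end ICT

/-- `ict(D₃, ⟨b⟩) = 3`: the number of isomorphism classes of left transversals of
the (non-normal) order-2 subgroup `⟨b⟩` in the dihedral group `D₃` is 3. -/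
theorem ict_D3 :
    Nat.card (Quot fun (T L : {S : Set (DihedralGroup 3) //
        IsLeftTransversal (Subgroup.zpowers (DihedralGroup.sr (0 : ZMod 3))) S}) =>
      ∃ σ : DihedralGroup 3 → DihedralGroup 3,
        IsLeftIso (Subgroup.zpowers (DihedralGroup.sr (0 : ZMod 3))) T.1 L.1 σ)
      = 3 := by
  show Nat.card (Quot ICT.rrel) = 3
  rw [Nat.card_congr ICT.bigEquiv]
  simp
end
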